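/- Let β, φ ∈ ℝ with cos(β/2) ≠ 0 and cos(φ/2) ≠ 0, and set ν = tan(β/2) and ξ₁ = tan(φ/2). Let (ξ_k)_{k ≥ 1} be a sequence of real numbers such that for every k ≥ 1: ξ_{2k−1} ≠ 0 and ξ_{2k} = 1/ξ_{2k−1}, and (1 − ν²)·ξ_{2k} − 2ν ≠ 0 and ξ_{2k+1} = (2ν·ξ_{2k} + 1 − ν²)/((1 − ν²)·ξ_{2k} − 2ν). Then for every k ≥ 1: (1 − ξ_{2k}²)/(1 + ξ_{2k}²) = −cos(φ + 2(k−1)β) and 2ξ_{2k}/(1 + ξ_{2k}²) = sin(φ + 2(k−1)β); and for every k ≥ 0: (1 − ξ_{2k+1}²)/(1 + ξ_{2k+1}²) = cos(φ + 2kβ) and 2ξ_{2k+1}/(1 + ξ_{2k+1}²) = sin(φ + 2kβ). -/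

import Mathlib

open Real

lemma tan_half_id (θ : ℝ) (h : Real.cos (θ/2) ≠ 0) :
    (1 - Real.tan (θ/2)^2)/(1+Real.tan (θ/2)^2) = Real.cos θ ∧
    2*Real.tan (θ/2)/(1+Real.tan (θ/2)^2) = Real.sin θ := by
  have h2 : Real.sin (θ/2)^2 + Real.cos (θ/2)^2 = 1 := Real.sin_sq_add_cos_sq _
  have hc : Real.cos θ = Real.cos (θ/2)^2 - Real.sin (θ/2)^2 := by
    conv_lhs => rw [show θ = 2*(θ/2) by ring]
    rw [Real.cos_two_mul']
  have hs : Real.sin θ = 2 * Real.sin (θ/2) * Real.cos (θ/2) := by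
    conv_lhs => rw [show θ = 2*(θ/2) by ring]
    rw [Real.sin_two_mul]
  constructor
  · rw [hc, Real.tan_eq_sin_div_cos]
    field_simp
    rw [show Real.cos (θ/2)^2 + Real.sin (θ/2)^2 = 1 by linarith]; ring
  · rw [hs, Real.tan_eq_sin_div_cos]
    field_simp
    rw [show Real.cos (θ/2)^2 + Real.sin (θ/2)^2 = 1 by linarith]; ring

lemma inv_step (x c s : ℝ) (hx : x ≠ 0)
    (hc : (1 - x^2)/(1+x^2) = c) (hs : 2*x/(1+x^2) = s) :
    (1 - (1/x)^2)/(1+(1/x)^2) = -c ∧ 2*(1/x)/(1+(1/x)^2) = s := by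
  have hp : (1:ℝ) + x^2 ≠ 0 := by positivity
  have e2 : 1 + (1/x)^2 = (x^2+1)/x^2 := by field_simp
  have hp2 : ((x:ℝ)^2+1)/x^2 ≠ 0 := by positivity
  rw [← hc, ← hs, e2]
  constructor
  · rw [div_eq_iff hp2]; field_simp; ring
  · rw [div_eq_iff hp2]; field_simp; ring

/-- For a ray reflected alternately off the horizontal line and a line making
angle `β` with it (with normal direction parameter `ν = tan(β/2)`), starting
with direction parameter `ξ₁ = tan(φ/2)` and striking the horizontal line
first, the sequence of reflected direction parameters satisfies the stated
closed trigonometric formulas. -/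
theorem reflected_direction_sequence (β φ : ℝ)
    (hβ : Real.cos (β / 2) ≠ 0) (hφ : Real.cos (φ / 2) ≠ 0)
    (ν : ℝ) (hν : ν = Real.tan (β / 2))
    (ξ : ℕ → ℝ) (hξ1 : ξ 1 = Real.tan (φ / 2))
    (hodd_ne : ∀ k, 1 ≤ k → ξ (2 * k - 1) ≠ 0)
    (heven : ∀ k, 1 ≤ k → ξ (2 * k) = 1 / ξ (2 * k - 1))
    (hden : ∀ k, 1 ≤ k → (1 - ν ^ 2) * ξ (2 * k) - 2 * ν ≠ 0)
    (hodd : ∀ k, 1 ≤ k →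
      ξ (2 * k + 1) = (2 * ν * ξ (2 * k) + 1 - ν ^ 2) / ((1 - ν ^ 2) * ξ (2 * k) - 2 * ν)) :
    (∀ k : ℕ, 1 ≤ k →
      (1 - ξ (2 * k) ^ 2) / (1 + ξ (2 * k) ^ 2) = -Real.cos (φ + 2 * ((k : ℝ) - 1) * β) ∧
      2 * ξ (2 * k) / (1 + ξ (2 * k) ^ 2) = Real.sin (φ + 2 * ((k : ℝ) - 1) * β)) ∧
    (∀ k : ℕ,
      (1 - ξ (2 * k + 1) ^ 2) / (1 + ξ (2 * k + 1) ^ 2) = Real.cos (φ + 2 * (k : ℝ) * β) ∧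
      2 * ξ (2 * k + 1) / (1 + ξ (2 * k + 1) ^ 2) = Real.sin (φ + 2 * (k : ℝ) * β)) := by
  obtain ⟨hνc, hνs⟩ := tan_half_id β hβ
  rw [← hν] at hνc hνs
  have hν1 : (1:ℝ) + ν^2 ≠ 0 := by positivity
  have Podd : ∀ k : ℕ,
      (1 - ξ (2 * k + 1) ^ 2) / (1 + ξ (2 * k + 1) ^ 2) = Real.cos (φ + 2 * (k : ℝ) * β) ∧
      2 * ξ (2 * k + 1) / (1 + ξ (2 * k + 1) ^ 2) = Real.sin (φ + 2 * (k : ℝ) * β) := by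
    intro k
    induction k with
    | zero =>
      obtain ⟨h1, h2⟩ := tan_half_id φ hφ
      rw [← hξ1] at h1 h2
      simpa using ⟨h1, h2⟩
    | succ k ih =>
      have hk1 : 1 ≤ k + 1 := Nat.le_add_left 1 k
      have hidx : 2 * (k + 1) - 1 = 2 * k + 1 := by omega
      have hne : ξ (2 * k + 1) ≠ 0 := by
        have := hodd_ne (k + 1) hk1; rwa [hidx] at this
      have heq : ξ (2 * (k+1)) = 1 / ξ (2 * k + 1) := by
        have := heven (k + 1) hk1; rwa [hidx] at this
      obtain ⟨ec, es⟩ := inv_step (ξ (2*k+1)) _ _ hne ih.1 ih.2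
      rw [← heq] at ec es
      have hD := hden (k + 1) hk1
      have hy := hodd (k + 1) hk1
      set x := ξ (2 * (k + 1)) with hx
      have hpx : (1:ℝ) + x^2 ≠ 0 := by positivity
      obtain ⟨ψ, hψ⟩ : ∃ ψ, ψ = φ + 2 * (k : ℝ) * β := ⟨_, rfl⟩
      rw [← hψ] at ec es
      have hcψ : Real.cos ψ = -((1 - x^2)/(1 + x^2)) := by rw [ec]; ring
      have hsψ : Real.sin ψ = 2*x/(1 + x^2) := es.symm
      have hangle : φ + 2 * (((k+1 : ℕ)) : ℝ) * β = ψ + β + β := by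
        push_cast; rw [hψ]; ring
      have hC : Real.cos (ψ + β + β)
          = Real.cos ψ * (Real.cos β * Real.cos β - Real.sin β * Real.sin β)
            - Real.sin ψ * (2 * Real.sin β * Real.cos β) := by
        rw [Real.cos_add, Real.cos_add, Real.sin_add]; ring
      have hS : Real.sin (ψ + β + β)
          = Real.sin ψ * (Real.cos β * Real.cos β - Real.sin β * Real.sin β)
            + Real.cos ψ * (2 * Real.sin β * Real.cos β) := by
        rw [Real.sin_add, Real.sin_add, Real.cos_add]; ring
      rw [hy, hangle, hC, hS, hcψ, hsψ, ← hνc, ← hνs]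
      have hD2 : ((1 - ν^2)*x - 2*ν)^2 ≠ 0 := pow_ne_zero 2 hD
      have e1 : (1:ℝ) + ((2*ν*x + 1 - ν^2)/((1 - ν^2)*x - 2*ν))^2
          = (1+ν^2)^2*(1+x^2)/((1 - ν^2)*x - 2*ν)^2 := by
        rw [div_pow, eq_div_iff hD2, add_mul, div_mul_cancel₀ _ hD2]; ring
      rw [e1]
      have e2 : (1:ℝ) - ((2*ν*x + 1 - ν^2)/((1 - ν^2)*x - 2*ν))^2
          = (((1 - ν^2)*x - 2*ν)^2 - (2*ν*x + 1 - ν^2)^2)/((1 - ν^2)*x - 2*ν)^2 := by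
        rw [div_pow, eq_div_iff hD2, sub_mul, div_mul_cancel₀ _ hD2]; ring
      constructor
      · rw [e2, div_div_div_cancel_right₀ hD2]
        field_simp
        ring
      · field_simp
        ring
  refine ⟨?_, Podd⟩
  intro k hk
  obtain ⟨k, rfl⟩ : ∃ m, k = m + 1 := ⟨k - 1, by omega⟩
  have hidx : 2 * (k + 1) - 1 = 2 * k + 1 := by omega
  have hne : ξ (2 * k + 1) ≠ 0 := by
    have := hodd_ne (k + 1) hk; rwa [hidx] at this
  have heq : ξ (2 * (k+1)) = 1 / ξ (2 * k + 1) := by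
    have := heven (k + 1) hk; rwa [hidx] at this
  obtain ⟨ec, es⟩ := inv_step (ξ (2*k+1)) _ _ hne (Podd k).1 (Podd k).2
  rw [← heq] at ec es
  have hangle : φ + 2 * ((((k+1 : ℕ)) : ℝ) - 1) * β = φ + 2 * (k:ℝ) * β := by
    push_cast; ring
  rw [hangle]
  exact ⟨ec, es⟩
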